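/- The group presented by generators R₁, R₂, R₃ with the single relation R₁R₂R₃ = R₂R₃R₁ = R₃R₁R₂ is isomorphic to the direct product (F₂) × ℤ of a free group of rank 2 with ℤ, where the F₂ factor is generated by (the images of) R₂ and R₃ and the ℤ factor is generated by R₁R₂R₃. -/

import Mathlib

/-- The relations of the presentation
`⟨R₁, R₂, R₃ | R₁R₂R₃ = R₂R₃R₁ = R₃R₁R₂⟩` of `PBr₃`. -/
def pbr3Rels : Set (FreeGroup (Fin 3)) :=
  { FreeGroup.of 0 * FreeGroup.of 1 * FreeGroup.of 2 *
      (FreeGroup.of 1 * FreeGroup.of 2 * FreeGroup.of 0)⁻¹,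
    FreeGroup.of 0 * FreeGroup.of 1 * FreeGroup.of 2 *
      (FreeGroup.of 2 * FreeGroup.of 0 * FreeGroup.of 1)⁻¹ }

namespace PBr3Aux

abbrev P := PresentedGroup pbr3Rels

def c : P := PresentedGroup.of 0 * PresentedGroup.of 1 * PresentedGroup.of 2

lemma rel_eq_one {r : FreeGroup (Fin 3)} (hr : r ∈ pbr3Rels) :
    (QuotientGroup.mk r : P) = 1 :=
  (QuotientGroup.eq_one_iff r).mpr (Subgroup.subset_normalClosure hr)

lemma rel1 : (PresentedGroup.of 0 * PresentedGroup.of 1 * PresentedGroup.of 2 : P)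
    = PresentedGroup.of 1 * PresentedGroup.of 2 * PresentedGroup.of 0 := by
  have := rel_eq_one (r := FreeGroup.of 0 * FreeGroup.of 1 * FreeGroup.of 2 *
      (FreeGroup.of 1 * FreeGroup.of 2 * FreeGroup.of 0)⁻¹) (Or.inl rfl)
  have h : (QuotientGroup.mk (FreeGroup.of 0 * FreeGroup.of 1 * FreeGroup.of 2) : P)
      = QuotientGroup.mk (FreeGroup.of 1 * FreeGroup.of 2 * FreeGroup.of 0) := by
    rw [← mul_inv_eq_one, ← QuotientGroup.mk_inv, ← QuotientGroup.mk_mul]; exact this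
  exact h

lemma rel2 : (PresentedGroup.of 0 * PresentedGroup.of 1 * PresentedGroup.of 2 : P)
    = PresentedGroup.of 2 * PresentedGroup.of 0 * PresentedGroup.of 1 := by
  have := rel_eq_one (r := FreeGroup.of 0 * FreeGroup.of 1 * FreeGroup.of 2 *
      (FreeGroup.of 2 * FreeGroup.of 0 * FreeGroup.of 1)⁻¹) (Or.inr rfl)
  have h : (QuotientGroup.mk (FreeGroup.of 0 * FreeGroup.of 1 * FreeGroup.of 2) : P)
      = QuotientGroup.mk (FreeGroup.of 2 * FreeGroup.of 0 * FreeGroup.of 1) := by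
    rw [← mul_inv_eq_one, ← QuotientGroup.mk_inv, ← QuotientGroup.mk_mul]; exact this
  exact h

lemma c_comm_of2 : Commute c (PresentedGroup.of 2 : P) := by
  have : (PresentedGroup.of 2 : P) * c = c * PresentedGroup.of 2 := by
    unfold c
    calc (PresentedGroup.of 2 : P) * (PresentedGroup.of 0 * .of 1 * .of 2)
        = (PresentedGroup.of 2 * .of 0 * .of 1) * .of 2 := by group
      _ = (PresentedGroup.of 0 * .of 1 * .of 2) * .of 2 := by rw [← rel2]
  exact this.symm

lemma c_comm_of1 : Commute c (PresentedGroup.of 1 : P) := by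
  have h23 : Commute c ((PresentedGroup.of 1 : P) * .of 2) := by
    have : c * (PresentedGroup.of 1 * .of 2 : P)
        = (PresentedGroup.of 1 * .of 2) * c := by
      unfold c
      calc (PresentedGroup.of 0 * .of 1 * .of 2 : P) * (.of 1 * .of 2)
          = (PresentedGroup.of 1 * .of 2 * .of 0) * (.of 1 * .of 2) := by rw [rel1]
        _ = (PresentedGroup.of 1 * .of 2) * (.of 0 * .of 1 * .of 2) := by group
    exact this
  have := h23.mul_right c_comm_of2.inv_right
  simpa using this

lemma c_comm_of0 : Commute c (PresentedGroup.of 0 : P) := by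
  have : (PresentedGroup.of 0 : P) * c = c * PresentedGroup.of 0 := by
    unfold c
    calc (PresentedGroup.of 0 : P) * (.of 0 * .of 1 * .of 2)
        = PresentedGroup.of 0 * (.of 1 * .of 2 * .of 0) := by rw [← rel1]
      _ = (PresentedGroup.of 0 * .of 1 * .of 2) * .of 0 := by group
  exact this.symm

lemma c_central (g : P) : Commute c g := by
  refine QuotientGroup.induction_on g ?_
  intro w
  induction w using FreeGroup.induction_on with
  | C1 => exact Commute.one_right c
  | of i =>
    show Commute c (PresentedGroup.of i)
    fin_cases i
    · exact c_comm_of0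
    · exact c_comm_of1
    · exact c_comm_of2
  | inv_of i h =>
    rw [QuotientGroup.mk_inv]; exact h.inv_right
  | mul x y hx hy =>
    rw [QuotientGroup.mk_mul]; exact hx.mul_right hy

/-- target values of generators -/
def f : Fin 3 → FreeGroup (Fin 2) × Multiplicative ℤ :=
  ![((FreeGroup.of 0 * FreeGroup.of 1)⁻¹, Multiplicative.ofAdd 1),
    (FreeGroup.of 0, 1), (FreeGroup.of 1, 1)]

lemma f_rels : ∀ r ∈ pbr3Rels, FreeGroup.lift f r = 1 := by
  rintro r (rfl | rfl) <;>
    · simp only [map_mul, map_inv, FreeGroup.lift_apply_of, f, Matrix.cons_val_zero,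
        Matrix.cons_val_one, Matrix.head_cons, Matrix.cons_val_two, Matrix.tail_cons]
      ext <;> simp <;> group

def φ : P →* FreeGroup (Fin 2) × Multiplicative ℤ := PresentedGroup.toGroup f_rels

def ψF : FreeGroup (Fin 2) →* P := FreeGroup.lift ![.of 1, .of 2]

def ψZ : Multiplicative ℤ →* P := zpowersHom P c

def ψ : FreeGroup (Fin 2) × Multiplicative ℤ →* P :=
  ψF.noncommCoprod ψZ (fun x n => ((c_central (ψF x)).symm.zpow_right _))

lemma comp1 : ψ.comp φ = MonoidHom.id P := by
  apply PresentedGroup.ext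
  intro i
  simp only [MonoidHom.comp_apply, MonoidHom.id_apply, φ, PresentedGroup.toGroup.of]
  fin_cases i
  · show ψ ((FreeGroup.of 0 * FreeGroup.of 1)⁻¹, Multiplicative.ofAdd 1) = PresentedGroup.of 0
    simp only [ψ, MonoidHom.noncommCoprod_apply, ψF, ψZ, map_inv, map_mul, FreeGroup.lift_apply_of,
      zpowersHom_apply, Matrix.cons_val_zero, Matrix.cons_val_one, Matrix.head_cons,
      toAdd_ofAdd, zpow_one]
    unfold c
    rw [rel1]; group
  · show ψ (FreeGroup.of 0, 1) = PresentedGroup.of 1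
    simp [ψ, ψF, ψZ, MonoidHom.noncommCoprod_apply]
  · show ψ (FreeGroup.of 1, 1) = PresentedGroup.of 2
    simp [ψ, ψF, ψZ, MonoidHom.noncommCoprod_apply]

lemma comp2 : φ.comp ψ = MonoidHom.id _ := by
  have hl : (φ.comp ψ).comp (MonoidHom.inl _ _) = MonoidHom.inl _ _ := by
    apply FreeGroup.ext_hom
    intro j
    fin_cases j <;>
      simp [ψ, ψF, ψZ, φ, f, MonoidHom.noncommCoprod_apply]
  have hr : (φ.comp ψ).comp (MonoidHom.inr _ _) = MonoidHom.inr _ _ := by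
    apply MonoidHom.ext_mint
    have hc : φ c = (1, Multiplicative.ofAdd 1) := by
      simp only [c, map_mul, φ, PresentedGroup.toGroup.of, f, Matrix.cons_val_zero,
        Matrix.cons_val_one, Matrix.head_cons, Matrix.cons_val_two, Matrix.tail_cons]
      ext <;> simp <;> group
    simp [ψ, ψF, ψZ, MonoidHom.noncommCoprod_apply, hc]
  apply MonoidHom.ext
  rintro ⟨x, n⟩
  have hx := DFunLike.congr_fun hl x
  have hn := DFunLike.congr_fun hr n
  simp only [MonoidHom.comp_apply, MonoidHom.inl_apply, MonoidHom.inr_apply] at hx hn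
  have : ((x, n) : FreeGroup (Fin 2) × Multiplicative ℤ) = (x, 1) * (1, n) := by
    simp
  rw [MonoidHom.id_apply, this, map_mul, MonoidHom.comp_apply, MonoidHom.comp_apply] at *
  rw [hx, hn]

lemma hc' : φ c = (1, Multiplicative.ofAdd 1) := by
  simp only [c, map_mul, φ, PresentedGroup.toGroup.of, f, Matrix.cons_val_zero,
    Matrix.cons_val_one, Matrix.head_cons, Matrix.cons_val_two, Matrix.tail_cons]
  ext <;> simp <;> group

end PBr3Aux

/-- `⟨R₁, R₂, R₃ | R₁R₂R₃ = R₂R₃R₁ = R₃R₁R₂⟩ ≅ F₂ × ℤ`, with the `F₂` factor generated by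
the images of `R₂` and `R₃`, and the `ℤ` factor generated by `R₁R₂R₃`. -/
theorem stmt_2 :
    ∃ e : PresentedGroup pbr3Rels ≃* FreeGroup (Fin 2) × Multiplicative ℤ,
      e (PresentedGroup.of 1) = (FreeGroup.of 0, 1) ∧
      e (PresentedGroup.of 2) = (FreeGroup.of 1, 1) ∧
      e (PresentedGroup.of (rels := pbr3Rels) 0 * PresentedGroup.of 1 * PresentedGroup.of 2)
        = (1, Multiplicative.ofAdd 1) := by
  refine ⟨MonoidHom.toMulEquiv PBr3Aux.φ PBr3Aux.ψ PBr3Aux.comp1 PBr3Aux.comp2, ?_, ?_, ?_⟩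
  · have he : (MonoidHom.toMulEquiv PBr3Aux.φ PBr3Aux.ψ PBr3Aux.comp1 PBr3Aux.comp2)
        (PresentedGroup.of 1) = PBr3Aux.φ (PresentedGroup.of 1) := rfl
    rw [he]
    simp [PBr3Aux.φ, PBr3Aux.f]
  · have he : (MonoidHom.toMulEquiv PBr3Aux.φ PBr3Aux.ψ PBr3Aux.comp1 PBr3Aux.comp2)
        (PresentedGroup.of 2) = PBr3Aux.φ (PresentedGroup.of 2) := rfl
    rw [he]
    simp [PBr3Aux.φ, PBr3Aux.f]
  · have he : (MonoidHom.toMulEquiv PBr3Aux.φ PBr3Aux.ψ PBr3Aux.comp1 PBr3Aux.comp2)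
        (PresentedGroup.of 0 * PresentedGroup.of 1 * PresentedGroup.of 2)
        = PBr3Aux.φ PBr3Aux.c := rfl
    rw [he, PBr3Aux.hc']
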